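/- If z and B are positive integers with B ≥ 2 satisfying the Pell equation z² − 8·B² = 1, then z is odd and the quadruple ((1 + z)/2, 2, B, 2) is a prefix polymorphism. -/
import Mathlib


/-- A quadruple `(x, n, B, k)` of positive integers with `B ≥ 2` is a *prefix
polymorphism* if `x^n = B^k·n + x` and `B^(k-1) ≤ x < B^k` (i.e. `x` has exactly
`k` digits in base `B`). -/
def IsPrefixPolymorphism (x n B k : ℕ) : Prop :=
  0 < x ∧ 0 < n ∧ 2 ≤ B ∧ 0 < k ∧
    x ^ n = B ^ k * n + x ∧ B ^ (k - 1) ≤ x ∧ x < B ^ k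

/-- Pell class, converse direction: if `z, B` are positive integers with
`B ≥ 2` and `z² - 8·B² = 1`, then `z` is odd and `((1+z)/2, 2, B, 2)` is a
prefix polymorphism. -/
theorem pell_class_backward (z B : ℕ) (hz : 0 < z) (hB : 2 ≤ B)
    (hpell : (z : ℤ) ^ 2 - 8 * (B : ℤ) ^ 2 = 1) :
    Odd z ∧ IsPrefixPolymorphism ((1 + z) / 2) 2 B 2 := by
  have hzsq : z ^ 2 = 8 * B ^ 2 + 1 := by
    have : (z : ℤ) ^ 2 = 8 * (B : ℤ) ^ 2 + 1 := by linarith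
    exact_mod_cast this
  have hne : ¬ Even (z ^ 2) := by
    rw [hzsq]
    simp [Nat.even_add_one, Nat.even_mul]
  have hodd : Odd z := by
    rw [← Nat.not_even_iff_odd]
    intro h
    exact hne (Nat.even_pow.mpr ⟨h, two_ne_zero⟩)
  obtain ⟨m, hm⟩ := hodd
  have hx : (1 + z) / 2 = m + 1 := by omega
  have hkey : m ^ 2 + m = 2 * B ^ 2 := by nlinarith [hzsq]
  have hB2 : 4 ≤ B ^ 2 := by nlinarith [hB]
  refine ⟨⟨m, hm⟩, ?_⟩
  rw [hx]
  refine ⟨by omega, by norm_num, hB, by norm_num, ?_, ?_, ?_⟩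
  · ring_nf; nlinarith [hkey]
  · show B ^ 1 ≤ m + 1
    rw [pow_one]
    by_contra h
    push_neg at h
    nlinarith [hkey, h, hB]
  · by_contra h
    push_neg at h
    have hm3 : 3 ≤ m := by linarith
    nlinarith [hkey, h, hm3, Nat.zero_le m]
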